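/- Let (C, E, s) be an n-exangulated category, F : C → A an additive functor to an abelian category A that is half exact (i.e., for every distinguished n-exangle X₀ → X₁ → ⋯ → X_{n+1} ⇢, the sequence FX₀ → FX₁ → ⋯ → FX_{n+1} is exact in A). Define E^F_R(X_{n+1}, X₀) ⊆ E(X_{n+1}, X₀) to consist of those δ such that for some (equivalently any) distinguished n-exangle realizing δ, the image F(f_n) of the last morphism f_n : Xₙ → X_{n+1} is an epimorphism in A. Then E^F_R is an additive subfunctor of E. -/

import Mathlib

open CategoryTheory CategoryTheory.Limits Opposite

universe v u v₂ u₂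

/-- A candidate `n`-exangle: an `(n+2)`-term sequence of composable morphisms in `C`,
in degrees `0, 1, …, n+1`. -/
structure NExCplx (C : Type u) [Category.{v} C] (n : ℕ) where
  X : Fin (n + 2) → C
  d : ∀ i : Fin (n + 1), X i.castSucc ⟶ X i.succ

namespace NEx

variable {C : Type u} [Category.{v} C]

/-- The degree `0` index. -/
abbrev fin0 (n : ℕ) : Fin (n + 2) := ⟨0, by omega⟩

/-- The degree `n+1` index. -/
abbrev finLast (n : ℕ) : Fin (n + 2) := Fin.last (n + 1)

/-- The group of `E`-extensions attached to a candidate `n`-exangle: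
`E(X_{n+1}, X₀)`. -/
abbrev NEext (E : Cᵒᵖ ⥤ C ⥤ AddCommGrpCat.{v}) {n : ℕ} (Z : NExCplx C n) : Type v :=
  (E.obj (op (Z.X (finLast n)))).obj (Z.X (fin0 n))

/-- Pushforward `a_*δ` of an extension `δ ∈ E(X, A)` along `a : A ⟶ A'`. -/
def pushf (E : Cᵒᵖ ⥤ C ⥤ AddCommGrpCat.{v}) {A A' X : C} (a : A ⟶ A')
    (δ : (E.obj (op X)).obj A) : (E.obj (op X)).obj A' :=
  ((E.obj (op X)).map a) δ

/-- Pullback `c^*δ` of an extension `δ ∈ E(X, A)` along `c : X' ⟶ X`. -/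
def pullb (E : Cᵒᵖ ⥤ C ⥤ AddCommGrpCat.{v}) {A X X' : C} (c : X' ⟶ X)
    (δ : (E.obj (op X)).obj A) : (E.obj (op X')).obj A :=
  ((E.map c.op).app A) δ

/-- Transport of an extension along equalities of its end objects. -/
def extCast (E : Cᵒᵖ ⥤ C ⥤ AddCommGrpCat.{v}) {A A' X X' : C} (hA : A = A') (hX : X = X')
    (δ : (E.obj (op X)).obj A) : (E.obj (op X')).obj A' :=
  pullb E (eqToHom hX.symm) (pushf E (eqToHom hA) δ)

/-- A morphism of (candidate) `n`-exangles `⟨Z, δ⟩ → ⟨W, ρ⟩`. -/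
structure ExangleMor (E : Cᵒᵖ ⥤ C ⥤ AddCommGrpCat.{v}) {n : ℕ} (Z W : NExCplx C n)
    (δ : NEext E Z) (ρ : NEext E W) where
  app : ∀ i : Fin (n + 2), Z.X i ⟶ W.X i
  comm : ∀ i : Fin (n + 1), Z.d i ≫ app i.succ = app i.castSucc ≫ W.d i
  compat : pushf E (app (fin0 n)) δ = pullb E (app (finLast n)) ρ


variable [Preadditive C] [HasBinaryBiproducts C]

/-- Objects of the total complex (mapping cone) of a ladder with rows `A`, `B`. -/
noncomputable def coneX (n : ℕ) (A B : Fin (n + 1) → C) (i : Fin (n + 2)) : C :=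
  if _ : i.val = 0 then A ⟨0, Nat.succ_pos n⟩
  else if _ : i.val ≤ n then A ⟨i.val, by omega⟩ ⊞ B ⟨i.val - 1, by omega⟩
  else B ⟨n, Nat.lt_succ_self n⟩

lemma coneX_zero (n : ℕ) (A B : Fin (n + 1) → C) :
    coneX n A B (fin0 n) = A ⟨0, Nat.succ_pos n⟩ := by
  simp [coneX, fin0]

lemma coneX_mid (n : ℕ) (A B : Fin (n + 1) → C) (i : Fin (n + 2))
    (h0 : i.val ≠ 0) (h1 : i.val ≤ n) :
    coneX n A B i = (A ⟨i.val, by omega⟩ ⊞ B ⟨i.val - 1, by omega⟩) := by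
  rw [coneX, dif_neg h0, dif_pos h1]

lemma coneX_last (n : ℕ) (A B : Fin (n + 1) → C) :
    coneX n A B (finLast n) = B ⟨n, Nat.lt_succ_self n⟩ := by
  rw [coneX, dif_neg (by simp [finLast]), dif_neg (by simp [finLast])]

/-- Differentials of the mapping cone of a ladder:
`d₀ = (-f₀, φ₀)ᵀ`, `dᵢ = [-fᵢ, 0; φᵢ, g_{i-1}]`, `dₙ = (φₙ, g_{n-1})`. -/
noncomputable def coneD (n : ℕ) (A B : Fin (n + 1) → C)
    (f : ∀ i : Fin n, A i.castSucc ⟶ A i.succ)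
    (g : ∀ i : Fin n, B i.castSucc ⟶ B i.succ)
    (φ : ∀ i : Fin (n + 1), A i ⟶ B i)
    (i : Fin (n + 1)) : coneX n A B i.castSucc ⟶ coneX n A B i.succ :=
  if h0 : i.val = 0 then
    if hn : n = 0 then
      eqToHom (show coneX n A B i.castSucc = A ⟨0, Nat.succ_pos n⟩ by
          simp [coneX, h0]) ≫
        φ ⟨0, Nat.succ_pos n⟩ ≫
        eqToHom (show B ⟨0, Nat.succ_pos n⟩ = coneX n A B i.succ by
          subst hn
          rw [coneX, dif_neg (by simp only [Fin.val_succ]; omega),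
            dif_neg (by simp only [Fin.val_succ]; omega)])
    else
      eqToHom (show coneX n A B i.castSucc = A ⟨i.val, i.isLt⟩ by
          rw [coneX, dif_pos (show (i.castSucc).val = 0 from h0)]
          exact congrArg A (Fin.ext h0.symm)) ≫
        biprod.lift (-(f ⟨i.val, by omega⟩)) (φ ⟨i.val, i.isLt⟩) ≫
        eqToHom (show (A ⟨i.val + 1, by omega⟩ ⊞ B ⟨i.val + 1 - 1, by omega⟩ : C)
            = coneX n A B i.succ by
          rw [coneX, dif_neg (by simp only [Fin.val_succ]; omega),
            dif_pos (by simp only [Fin.val_succ]; omega)]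
          rfl)
  else if hv : i.val < n then
    eqToHom (show coneX n A B i.castSucc
          = (A ⟨i.val, i.isLt⟩ ⊞ B ⟨i.val - 1, by omega⟩) by
        rw [coneX, dif_neg (show ¬(i.castSucc).val = 0 from h0),
          dif_pos (show (i.castSucc).val ≤ n by simp only [Fin.coe_castSucc]; omega)]
        rfl) ≫
      biprod.lift (biprod.desc (-(f ⟨i.val, hv⟩)) 0)
        (biprod.desc (φ ⟨i.val, i.isLt⟩)
          (g ⟨i.val - 1, by omega⟩ ≫
            eqToHom (congrArg B (Fin.ext (show i.val - 1 + 1 = i.val by omega))))) ≫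
      eqToHom (show (A ⟨i.val + 1, by omega⟩ ⊞ B ⟨i.val + 1 - 1, by omega⟩ : C)
          = coneX n A B i.succ by
        rw [coneX, dif_neg (by simp only [Fin.val_succ]; omega),
          dif_pos (by simp only [Fin.val_succ]; omega)]
        rfl)
  else
    eqToHom (show coneX n A B i.castSucc
          = (A ⟨i.val, i.isLt⟩ ⊞ B ⟨i.val - 1, by have := i.isLt; omega⟩) by
        rw [coneX, dif_neg (show ¬(i.castSucc).val = 0 from h0),
          dif_pos (show (i.castSucc).val ≤ n by
            simp only [Fin.coe_castSucc]; have := i.isLt; omega)]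
        rfl) ≫
      biprod.desc (φ ⟨i.val, i.isLt⟩)
        (g ⟨i.val - 1, by have := i.isLt; omega⟩ ≫
          eqToHom (congrArg B (Fin.ext (show i.val - 1 + 1 = i.val by omega)))) ≫
      eqToHom (show B ⟨i.val, i.isLt⟩ = coneX n A B i.succ by
        rw [coneX, dif_neg (by simp only [Fin.val_succ]; omega),
          dif_neg (by simp only [Fin.val_succ]; have := i.isLt; omega)]
        exact congrArg B (Fin.ext (show (i.val : ℕ) = n by have := i.isLt; omega)))

/-- The mapping cone (total complex) of a ladder, as a candidate `n`-exangle. -/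
noncomputable def coneCplx (n : ℕ) (A B : Fin (n + 1) → C)
    (f : ∀ i : Fin n, A i.castSucc ⟶ A i.succ)
    (g : ∀ i : Fin n, B i.castSucc ⟶ B i.succ)
    (φ : ∀ i : Fin (n + 1), A i ⟶ B i) : NExCplx C n :=
  ⟨coneX n A B, coneD n A B f g φ⟩


/-- Objects of the total complex (mapping cocone) of a ladder with rows `A`, `B`. -/
noncomputable def coconeX (n : ℕ) (A B : Fin (n + 1) → C) (i : Fin (n + 2)) : C :=
  if _ : i.val = 0 then A ⟨0, Nat.succ_pos n⟩
  else if _ : i.val ≤ n then B ⟨i.val - 1, by omega⟩ ⊞ A ⟨i.val, by omega⟩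
  else B ⟨n, Nat.lt_succ_self n⟩

/-- Differentials of the mapping cocone of a ladder:
`d₀ = (φ₀, -f₀)ᵀ`, `dᵢ = [g_{i-1}, φᵢ; 0, -fᵢ]`, `dₙ = (g_{n-1}, φₙ)`. -/
noncomputable def coconeD (n : ℕ) (A B : Fin (n + 1) → C)
    (f : ∀ i : Fin n, A i.castSucc ⟶ A i.succ)
    (g : ∀ i : Fin n, B i.castSucc ⟶ B i.succ)
    (φ : ∀ i : Fin (n + 1), A i ⟶ B i)
    (i : Fin (n + 1)) : coconeX n A B i.castSucc ⟶ coconeX n A B i.succ :=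
  if h0 : i.val = 0 then
    if hn : n = 0 then
      eqToHom (show coconeX n A B i.castSucc = A ⟨0, Nat.succ_pos n⟩ by
          simp [coconeX, h0]) ≫
        φ ⟨0, Nat.succ_pos n⟩ ≫
        eqToHom (show B ⟨0, Nat.succ_pos n⟩ = coconeX n A B i.succ by
          subst hn
          rw [coconeX, dif_neg (by simp only [Fin.val_succ]; omega),
            dif_neg (by simp only [Fin.val_succ]; omega)])
    else
      eqToHom (show coconeX n A B i.castSucc = A ⟨i.val, i.isLt⟩ by
          rw [coconeX, dif_pos (show (i.castSucc).val = 0 from h0)]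
          exact congrArg A (Fin.ext h0.symm)) ≫
        biprod.lift (φ ⟨i.val, i.isLt⟩) (-(f ⟨i.val, by omega⟩)) ≫
        eqToHom (show (B ⟨i.val + 1 - 1, by omega⟩ ⊞ A ⟨i.val + 1, by omega⟩ : C)
            = coconeX n A B i.succ by
          rw [coconeX, dif_neg (by simp only [Fin.val_succ]; omega),
            dif_pos (by simp only [Fin.val_succ]; omega)]
          rfl)
  else if hv : i.val < n then
    eqToHom (show coconeX n A B i.castSucc
          = (B ⟨i.val - 1, by omega⟩ ⊞ A ⟨i.val, i.isLt⟩) by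
        rw [coconeX, dif_neg (show ¬(i.castSucc).val = 0 from h0),
          dif_pos (show (i.castSucc).val ≤ n by simp only [Fin.coe_castSucc]; omega)]
        rfl) ≫
      biprod.lift
        (biprod.desc (g ⟨i.val - 1, by omega⟩ ≫
            eqToHom (congrArg B (Fin.ext (show i.val - 1 + 1 = i.val by omega))))
          (φ ⟨i.val, i.isLt⟩))
        (biprod.desc 0 (-(f ⟨i.val, hv⟩))) ≫
      eqToHom (show (B ⟨i.val + 1 - 1, by omega⟩ ⊞ A ⟨i.val + 1, by omega⟩ : C)
          = coconeX n A B i.succ by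
        rw [coconeX, dif_neg (by simp only [Fin.val_succ]; omega),
          dif_pos (by simp only [Fin.val_succ]; omega)]
        rfl)
  else
    eqToHom (show coconeX n A B i.castSucc
          = (B ⟨i.val - 1, by have := i.isLt; omega⟩ ⊞ A ⟨i.val, i.isLt⟩) by
        rw [coconeX, dif_neg (show ¬(i.castSucc).val = 0 from h0),
          dif_pos (show (i.castSucc).val ≤ n by
            simp only [Fin.coe_castSucc]; have := i.isLt; omega)]
        rfl) ≫
      biprod.desc
        (g ⟨i.val - 1, by have := i.isLt; omega⟩ ≫
          eqToHom (congrArg B (Fin.ext (show i.val - 1 + 1 = i.val by omega))))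
        (φ ⟨i.val, i.isLt⟩) ≫
      eqToHom (show B ⟨i.val, i.isLt⟩ = coconeX n A B i.succ by
        rw [coconeX, dif_neg (by simp only [Fin.val_succ]; omega),
          dif_neg (by simp only [Fin.val_succ]; have := i.isLt; omega)]
        exact congrArg B (Fin.ext (show (i.val : ℕ) = n by have := i.isLt; omega)))

noncomputable def coconeCplx (n : ℕ) (A B : Fin (n + 1) → C)
    (f : ∀ i : Fin n, A i.castSucc ⟶ A i.succ)
    (g : ∀ i : Fin n, B i.castSucc ⟶ B i.succ)
    (φ : ∀ i : Fin (n + 1), A i ⟶ B i) : NExCplx C n :=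
  ⟨coconeX n A B, coconeD n A B f g φ⟩


/-- Differentials of the total complex in the second sign convention:
`d₀ = (-f₀, φ₀)ᵀ`, `dᵢ = [fᵢ, 0; (-1)^{i+1}φᵢ, g_{i-1}]`,
`dₙ = ((-1)^{n+1}φₙ, g_{n-1})`. -/
noncomputable def coneD' (n : ℕ) (A B : Fin (n + 1) → C)
    (f : ∀ i : Fin n, A i.castSucc ⟶ A i.succ)
    (g : ∀ i : Fin n, B i.castSucc ⟶ B i.succ)
    (φ : ∀ i : Fin (n + 1), A i ⟶ B i)
    (i : Fin (n + 1)) : coneX n A B i.castSucc ⟶ coneX n A B i.succ :=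
  if h0 : i.val = 0 then
    if hn : n = 0 then
      eqToHom (show coneX n A B i.castSucc = A ⟨0, Nat.succ_pos n⟩ by
          simp [coneX, h0]) ≫
        φ ⟨0, Nat.succ_pos n⟩ ≫
        eqToHom (show B ⟨0, Nat.succ_pos n⟩ = coneX n A B i.succ by
          subst hn
          rw [coneX, dif_neg (by simp only [Fin.val_succ]; omega),
            dif_neg (by simp only [Fin.val_succ]; omega)])
    else
      eqToHom (show coneX n A B i.castSucc = A ⟨i.val, i.isLt⟩ by
          rw [coneX, dif_pos (show (i.castSucc).val = 0 from h0)]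
          exact congrArg A (Fin.ext h0.symm)) ≫
        biprod.lift (-(f ⟨i.val, by omega⟩)) (φ ⟨i.val, i.isLt⟩) ≫
        eqToHom (show (A ⟨i.val + 1, by omega⟩ ⊞ B ⟨i.val + 1 - 1, by omega⟩ : C)
            = coneX n A B i.succ by
          rw [coneX, dif_neg (by simp only [Fin.val_succ]; omega),
            dif_pos (by simp only [Fin.val_succ]; omega)]
          rfl)
  else if hv : i.val < n then
    eqToHom (show coneX n A B i.castSucc
          = (A ⟨i.val, i.isLt⟩ ⊞ B ⟨i.val - 1, by omega⟩) by
        rw [coneX, dif_neg (show ¬(i.castSucc).val = 0 from h0),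
          dif_pos (show (i.castSucc).val ≤ n by simp only [Fin.coe_castSucc]; omega)]
        rfl) ≫
      biprod.lift (biprod.desc (f ⟨i.val, hv⟩) 0)
        (biprod.desc (((-1 : ℤ) ^ (i.val + 1)) • φ ⟨i.val, i.isLt⟩)
          (g ⟨i.val - 1, by omega⟩ ≫
            eqToHom (congrArg B (Fin.ext (show i.val - 1 + 1 = i.val by omega))))) ≫
      eqToHom (show (A ⟨i.val + 1, by omega⟩ ⊞ B ⟨i.val + 1 - 1, by omega⟩ : C)
          = coneX n A B i.succ by
        rw [coneX, dif_neg (by simp only [Fin.val_succ]; omega),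
          dif_pos (by simp only [Fin.val_succ]; omega)]
        rfl)
  else
    eqToHom (show coneX n A B i.castSucc
          = (A ⟨i.val, i.isLt⟩ ⊞ B ⟨i.val - 1, by have := i.isLt; omega⟩) by
        rw [coneX, dif_neg (show ¬(i.castSucc).val = 0 from h0),
          dif_pos (show (i.castSucc).val ≤ n by
            simp only [Fin.coe_castSucc]; have := i.isLt; omega)]
        rfl) ≫
      biprod.desc (((-1 : ℤ) ^ (i.val + 1)) • φ ⟨i.val, i.isLt⟩)
        (g ⟨i.val - 1, by have := i.isLt; omega⟩ ≫
          eqToHom (congrArg B (Fin.ext (show i.val - 1 + 1 = i.val by omega)))) ≫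
      eqToHom (show B ⟨i.val, i.isLt⟩ = coneX n A B i.succ by
        rw [coneX, dif_neg (by simp only [Fin.val_succ]; omega),
          dif_neg (by simp only [Fin.val_succ]; have := i.isLt; omega)]
        exact congrArg B (Fin.ext (show (i.val : ℕ) = n by have := i.isLt; omega)))



lemma coconeX_zero (n : ℕ) (A B : Fin (n + 1) → C) :
    coconeX n A B (fin0 n) = A ⟨0, Nat.succ_pos n⟩ := by
  simp [coconeX, fin0]

lemma coconeX_last (n : ℕ) (A B : Fin (n + 1) → C) :
    coconeX n A B (finLast n) = B ⟨n, Nat.lt_succ_self n⟩ := by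
  rw [coconeX, dif_neg (by simp [finLast]), dif_neg (by simp [finLast])]

variable [HasZeroObject C]

/-- A ladder (with rows `A`, `B`, horizontal maps `f`, `g` and vertical maps `φ`)
is a homotopy cartesian diagram with differential `dl` if its total complex
(mapping cone) together with `dl` is a distinguished `n`-exangle. -/
noncomputable def IsHomotopyCartesian (n : ℕ) (E : Cᵒᵖ ⥤ C ⥤ AddCommGrpCat.{v})
    (dist : ∀ Z : NExCplx C n, NEext E Z → Prop)
    (A B : Fin (n + 1) → C)
    (f : ∀ i : Fin n, A i.castSucc ⟶ A i.succ)
    (g : ∀ i : Fin n, B i.castSucc ⟶ B i.succ)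
    (φ : ∀ i : Fin (n + 1), A i ⟶ B i)
    (dl : (E.obj (op (B ⟨n, Nat.lt_succ_self n⟩))).obj (A ⟨0, Nat.succ_pos n⟩)) : Prop :=
  dist (coneCplx n A B f g φ)
    (extCast E (coneX_zero n A B).symm (coneX_last n A B).symm dl)

/-- The dual notion, using the mapping cocone. -/
noncomputable def IsCoHomotopyCartesian (n : ℕ) (E : Cᵒᵖ ⥤ C ⥤ AddCommGrpCat.{v})
    (dist : ∀ Z : NExCplx C n, NEext E Z → Prop)
    (A B : Fin (n + 1) → C)
    (f : ∀ i : Fin n, A i.castSucc ⟶ A i.succ)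
    (g : ∀ i : Fin n, B i.castSucc ⟶ B i.succ)
    (φ : ∀ i : Fin (n + 1), A i ⟶ B i)
    (dl : (E.obj (op (B ⟨n, Nat.lt_succ_self n⟩))).obj (A ⟨0, Nat.succ_pos n⟩)) : Prop :=
  dist (coconeCplx n A B f g φ)
    (extCast E (coconeX_zero n A B).symm (coconeX_last n A B).symm dl)

/-- `fm` is an inflation: it occurs as the `0`-th differential of some distinguished
`n`-exangle. -/
def IsInflationFor (n : ℕ) (E : Cᵒᵖ ⥤ C ⥤ AddCommGrpCat.{v})
    (dist : ∀ Z : NExCplx C n, NEext E Z → Prop) {X Y : C} (fm : X ⟶ Y) : Prop :=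
  ∃ (Z : NExCplx C n) (δ : NEext E Z), dist Z δ ∧
    ∃ (h1 : Z.X (fin0 n) = X) (h2 : Z.X (Fin.succ ⟨0, Nat.succ_pos n⟩) = Y),
      Z.d ⟨0, Nat.succ_pos n⟩ = eqToHom h1 ≫ fm ≫ eqToHom h2.symm

/-- `gm` is a deflation: it occurs as the `n`-th differential of some distinguished
`n`-exangle. -/
def IsDeflationFor (n : ℕ) (E : Cᵒᵖ ⥤ C ⥤ AddCommGrpCat.{v})
    (dist : ∀ Z : NExCplx C n, NEext E Z → Prop) {X Y : C} (gm : X ⟶ Y) : Prop :=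
  ∃ (Z : NExCplx C n) (δ : NEext E Z), dist Z δ ∧
    ∃ (h1 : Z.X (Fin.castSucc (Fin.last n)) = X) (h2 : Z.X (finLast n) = Y),
      Z.d (Fin.last n) = eqToHom h1 ≫ gm ≫ eqToHom h2.symm

/-- A pre-`n`-exangulated category structure on the additive category `C`:
an additive bifunctor `E : Cᵒᵖ × C → Ab` together with an exact realization,
recorded by the predicate `Distinguished` singling out the distinguished
`n`-exangles, subject to exactness of the associated Hom-sequences (R1),
existence of realizations, lifting of morphisms of extensions (R0), and
closure of inflations and deflations under composition (EA1). -/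
structure PreNExangulated (C : Type u) [Category.{v} C] [Preadditive C]
    [HasZeroObject C] [HasBinaryBiproducts C] (n : ℕ) where
  E : Cᵒᵖ ⥤ C ⥤ AddCommGrpCat.{v}
  Distinguished : ∀ Z : NExCplx C n, NEext E Z → Prop
  exact_contra_mid : ∀ ⦃Z : NExCplx C n⦄ ⦃δ : NEext E Z⦄, Distinguished Z δ →
    ∀ (W : C) (i : Fin n),
      Function.Exact (fun h : W ⟶ Z.X i.castSucc.castSucc => h ≫ Z.d i.castSucc)
        (fun h : W ⟶ Z.X i.succ.castSucc => h ≫ Z.d i.succ)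
  exact_contra_last : ∀ ⦃Z : NExCplx C n⦄ ⦃δ : NEext E Z⦄, Distinguished Z δ →
    ∀ (W : C),
      Function.Exact (fun h : W ⟶ Z.X (Fin.castSucc (Fin.last n)) => h ≫ Z.d (Fin.last n))
        (fun h : W ⟶ Z.X (finLast n) => pullb E h δ)
  exact_cov_mid : ∀ ⦃Z : NExCplx C n⦄ ⦃δ : NEext E Z⦄, Distinguished Z δ →
    ∀ (W : C) (i : Fin n),
      Function.Exact (fun h : Z.X i.succ.succ ⟶ W => Z.d i.succ ≫ h)
        (fun h : Z.X i.castSucc.succ ⟶ W => Z.d i.castSucc ≫ h)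
  exact_cov_first : ∀ ⦃Z : NExCplx C n⦄ ⦃δ : NEext E Z⦄, Distinguished Z δ →
    ∀ (W : C),
      Function.Exact (fun h : Z.X (Fin.succ ⟨0, Nat.succ_pos n⟩) ⟶ W => Z.d ⟨0, Nat.succ_pos n⟩ ≫ h)
        (fun h : Z.X (fin0 n) ⟶ W => pushf E h δ)
  lift_exists : ∀ ⦃Z W : NExCplx C n⦄ ⦃δ : NEext E Z⦄ ⦃ρ : NEext E W⦄,
    Distinguished Z δ → Distinguished W ρ →
    ∀ (a : Z.X (fin0 n) ⟶ W.X (fin0 n)) (c : Z.X (finLast n) ⟶ W.X (finLast n)),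
      pushf E a δ = pullb E c ρ →
      ∃ φ : ExangleMor E Z W δ ρ, φ.app (fin0 n) = a ∧ φ.app (finLast n) = c
  realize : ∀ (A Xl : C) (δ : (E.obj (op Xl)).obj A),
    ∃ (Z : NExCplx C n) (h0 : Z.X (fin0 n) = A) (hl : Z.X (finLast n) = Xl),
      Distinguished Z (extCast E h0.symm hl.symm δ)
  infl_comp : ∀ {X Y W : C} (f : X ⟶ Y) (g : Y ⟶ W),
    IsInflationFor n E Distinguished f → IsInflationFor n E Distinguished g →
      IsInflationFor n E Distinguished (f ≫ g)
  defl_comp : ∀ {X Y W : C} (f : X ⟶ Y) (g : Y ⟶ W),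
    IsDeflationFor n E Distinguished f → IsDeflationFor n E Distinguished g →
      IsDeflationFor n E Distinguished (f ≫ g)

/-- The axiom (EA2): a morphism of extensions of the form `(id, c)` between
distinguished `n`-exangles admits a good lift, i.e. one whose mapping cone
together with `(d₀^X)_*ρ` is again a distinguished `n`-exangle. -/
noncomputable def EA2For (n : ℕ) (E : Cᵒᵖ ⥤ C ⥤ AddCommGrpCat.{v})
    (dist : ∀ Z : NExCplx C n, NEext E Z → Prop) : Prop :=
  ∀ (Z W : NExCplx C n) (δ : NEext E Z) (ρ : NEext E W),
    dist Z δ → dist W ρ →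
    ∀ (h0 : Z.X (fin0 n) = W.X (fin0 n)) (c : Z.X (finLast n) ⟶ W.X (finLast n)),
      pushf E (eqToHom h0) δ = pullb E c ρ →
      ∃ φ : ExangleMor E Z W δ ρ,
        φ.app (fin0 n) = eqToHom h0 ∧ φ.app (finLast n) = c ∧
        IsHomotopyCartesian n E dist (fun i => Z.X i.succ) (fun i => W.X i.succ)
          (fun i => Z.d i.succ) (fun i => W.d i.succ) (fun i => φ.app i.succ)
          (pushf E (eqToHom h0.symm ≫ Z.d ⟨0, Nat.succ_pos n⟩) ρ)

/-- The condition (EA2-1): given two distinguished `n`-exangles starting at the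
same object and a morphism `φ₁` compatible with the first differentials, it
extends to a morphism of `n`-exangles `(id, φ₁, φ₂, …, φ_{n+1})` whose induced
ladder (in degrees `1, …, n+1`) is homotopy cartesian with differential
`(f₀)_*δ'`. -/
noncomputable def EA21For (n : ℕ) (E : Cᵒᵖ ⥤ C ⥤ AddCommGrpCat.{v})
    (dist : ∀ Z : NExCplx C n, NEext E Z → Prop) : Prop :=
  ∀ (Z W : NExCplx C n) (δ : NEext E Z) (δ' : NEext E W),
    dist Z δ → dist W δ' →
    ∀ (h0 : Z.X (fin0 n) = W.X (fin0 n))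
      (φ1 : Z.X (Fin.succ ⟨0, Nat.succ_pos n⟩) ⟶ W.X (Fin.succ ⟨0, Nat.succ_pos n⟩)),
      Z.d ⟨0, Nat.succ_pos n⟩ ≫ φ1 = eqToHom h0 ≫ W.d ⟨0, Nat.succ_pos n⟩ →
      ∃ φ : ExangleMor E Z W δ δ',
        φ.app (fin0 n) = eqToHom h0 ∧ φ.app (Fin.succ ⟨0, Nat.succ_pos n⟩) = φ1 ∧
        IsHomotopyCartesian n E dist (fun i => Z.X i.succ) (fun i => W.X i.succ)
          (fun i => Z.d i.succ) (fun i => W.d i.succ) (fun i => φ.app i.succ)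
          (pushf E (eqToHom h0.symm ≫ Z.d ⟨0, Nat.succ_pos n⟩) δ')

/-- The axiom (EA2)ᵒᵖ, dual to (EA2), via mapping cocones. -/
noncomputable def EA2opFor (n : ℕ) (E : Cᵒᵖ ⥤ C ⥤ AddCommGrpCat.{v})
    (dist : ∀ Z : NExCplx C n, NEext E Z → Prop) : Prop :=
  ∀ (W Z : NExCplx C n) (ρ : NEext E W) (δ : NEext E Z),
    dist W ρ → dist Z δ →
    ∀ (hl : W.X (finLast n) = Z.X (finLast n)) (a : W.X (fin0 n) ⟶ Z.X (fin0 n)),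
      pushf E a ρ = pullb E (eqToHom hl) δ →
      ∃ φ : ExangleMor E W Z ρ δ,
        φ.app (fin0 n) = a ∧ φ.app (finLast n) = eqToHom hl ∧
        IsCoHomotopyCartesian n E dist (fun i => W.X i.castSucc) (fun i => Z.X i.castSucc)
          (fun i => W.d i.castSucc) (fun i => Z.d i.castSucc) (fun i => φ.app i.castSucc)
          (pullb E (Z.d (Fin.last n) ≫ eqToHom hl.symm) ρ)

/-- An `n`-exangulated category: a pre-`n`-exangulated category satisfying
(EA2) and (EA2)ᵒᵖ. -/
structure NExangulated (C : Type u) [Category.{v} C] [Preadditive C]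
    [HasZeroObject C] [HasBinaryBiproducts C] (n : ℕ)
    extends PreNExangulated C n where
  ea2 : EA2For n E Distinguished
  ea2op : EA2opFor n E Distinguished

section HalfExact

variable {A : Type u₂} [Category.{v₂} A] [Abelian A]

/-- A functor `F : C → 𝒜` to an abelian category is half exact if it sends every
distinguished `n`-exangle `X₀ → ⋯ → X_{n+1}` to an exact sequence
`FX₀ → ⋯ → FX_{n+1}`. -/
def IsHalfExact {n : ℕ} (N : NExangulated C n) (F : C ⥤ A) : Prop :=
  ∀ ⦃Z : NExCplx C n⦄ ⦃δ : NEext N.E Z⦄, N.Distinguished Z δ → ∀ i : Fin n,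
    ∃ w : F.map (Z.d i.castSucc) ≫ F.map (Z.d i.succ) = 0,
      (ShortComplex.mk (F.map (Z.d i.castSucc)) (F.map (Z.d i.succ)) w).Exact

/-- The subset `E^F_R(X_{n+1}, X₀) ⊆ E(X_{n+1}, X₀)` of extensions all of whose
realizing distinguished `n`-exangles have `F`-epimorphic last differential. -/
def EFR {n : ℕ} (N : NExangulated C n) (F : C ⥤ A) (Xl X0 : C) :
    Set ((N.E.obj (op Xl)).obj X0) :=
  {δ | ∀ (Z : NExCplx C n) (h0 : Z.X (fin0 n) = X0) (hl : Z.X (finLast n) = Xl),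
      N.Distinguished Z (extCast N.E h0.symm hl.symm δ) →
        Epi (F.map (Z.d (Fin.last n)))}

end HalfExact

/-- `gm` is a deflation for the relative structure determined by the subfunctor `S`:
it is the last differential of a distinguished `n`-exangle whose extension lies
in `S`. -/
def IsRelDeflation (n : ℕ) (E : Cᵒᵖ ⥤ C ⥤ AddCommGrpCat.{v})
    (dist : ∀ Z : NExCplx C n, NEext E Z → Prop)
    (S : ∀ Xl X0 : C, Set ((E.obj (op Xl)).obj X0)) {X Y : C} (gm : X ⟶ Y) : Prop :=
  ∃ (Z : NExCplx C n) (δ : NEext E Z), dist Z δ ∧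
    δ ∈ S (Z.X (finLast n)) (Z.X (fin0 n)) ∧
    ∃ (h1 : Z.X (Fin.castSucc (Fin.last n)) = X) (h2 : Z.X (finLast n) = Y),
      Z.d (Fin.last n) = eqToHom h1 ≫ gm ≫ eqToHom h2.symm



set_option linter.unusedSectionVars false

section AuxCalc

variable {E : Cᵒᵖ ⥤ C ⥤ AddCommGrpCat.{v}}

lemma pushf_pushf {A A' A'' X : C} (a : A ⟶ A') (b : A' ⟶ A'') (δ : (E.obj (op X)).obj A) :
    pushf E b (pushf E a δ) = pushf E (a ≫ b) δ := by
  simp only [pushf, Functor.map_comp]; rfl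

@[simp] lemma pushf_id {A X : C} (δ : (E.obj (op X)).obj A) : pushf E (𝟙 A) δ = δ := by
  show ((E.obj (op X)).map (𝟙 A)) δ = δ
  simp only [CategoryTheory.Functor.map_id]; rfl

lemma pullb_pullb {A X X' X'' : C} (c : X'' ⟶ X') (c' : X' ⟶ X) (δ : (E.obj (op X)).obj A) :
    pullb E c (pullb E c' δ) = pullb E (c ≫ c') δ := by
  simp only [pullb, op_comp, Functor.map_comp]; rfl

@[simp] lemma pullb_id {A X : C} (δ : (E.obj (op X)).obj A) : pullb E (𝟙 X) δ = δ := by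
  rw [pullb]
  have : (𝟙 X).op = 𝟙 (op X) := rfl
  rw [this, CategoryTheory.Functor.map_id]; rfl

lemma pushf_pullb {A A' X X' : C} (a : A ⟶ A') (c : X' ⟶ X) (δ : (E.obj (op X)).obj A) :
    pushf E a (pullb E c δ) = pullb E c (pushf E a δ) :=
  (ConcreteCategory.congr_hom ((E.map c.op).naturality a) δ).symm

@[simp] lemma pushf_zero {A A' X : C} (a : A ⟶ A') :
    pushf E a (0 : (E.obj (op X)).obj A) = 0 := by simp [pushf]

@[simp] lemma pullb_zero_ext {A X X' : C} (c : X' ⟶ X) :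
    pullb E c (0 : (E.obj (op X)).obj A) = 0 := by simp [pullb]

lemma pushf_add {A A' X : C} (a : A ⟶ A') (δ δ' : (E.obj (op X)).obj A) :
    pushf E a (δ + δ') = pushf E a δ + pushf E a δ' := by simp [pushf]

lemma pullb_add {A X X' : C} (c : X' ⟶ X) (δ δ' : (E.obj (op X)).obj A) :
    pullb E c (δ + δ') = pullb E c δ + pullb E c δ' := by simp [pullb]

lemma pushf_sub {A A' X : C} (a : A ⟶ A') (δ δ' : (E.obj (op X)).obj A) :
    pushf E a (δ - δ') = pushf E a δ - pushf E a δ' := by simp [pushf]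

lemma pullb_sub {A X X' : C} (c : X' ⟶ X) (δ δ' : (E.obj (op X)).obj A) :
    pullb E c (δ - δ') = pullb E c δ - pullb E c δ' := by simp [pullb]

lemma pushf_eqToHom_eq_zero_iff {A A' X : C} (h : A = A') (δ : (E.obj (op X)).obj A) :
    pushf E (eqToHom h) δ = 0 ↔ δ = 0 := by subst h; simp

lemma extCast_eq (E : Cᵒᵖ ⥤ C ⥤ AddCommGrpCat.{v}) {A A' X X' : C} (hA : A = A') (hX : X = X')
    (δ : (E.obj (op X)).obj A) :
    extCast E hA hX δ = pullb E (eqToHom hX.symm) (pushf E (eqToHom hA) δ) := rfl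

end AuxCalc

section AuxSub

variable {n : ℕ}

lemma pullb_extCast_eq_zero_iff (NP : PreNExangulated C n) {X0 Xl W : C}
    (δ : (NP.E.obj (op Xl)).obj X0) {Z : NExCplx C n}
    (h0 : Z.X (fin0 n) = X0) (hl : Z.X (finLast n) = Xl)
    (hd : NP.Distinguished Z (extCast NP.E h0.symm hl.symm δ)) (c : W ⟶ Xl) :
    pullb NP.E c δ = 0 ↔
      ∃ h : W ⟶ Z.X (Fin.castSucc (Fin.last n)),
        h ≫ Z.d (Fin.last n) = c ≫ eqToHom hl.symm := by
  have hE := NP.exact_contra_last hd W (c ≫ eqToHom hl.symm)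
  have key : pullb NP.E (c ≫ eqToHom hl.symm) (extCast NP.E h0.symm hl.symm δ)
      = pushf NP.E (eqToHom h0.symm) (pullb NP.E c δ) := by
    rw [extCast_eq, pullb_pullb, Category.assoc, eqToHom_trans, eqToHom_refl,
      Category.comp_id, ← pushf_pullb]
  constructor
  · intro h
    obtain ⟨x, hx⟩ := hE.mp (by
      show pullb NP.E (c ≫ eqToHom hl.symm) _ = 0
      rw [key, h, pushf_zero])
    exact ⟨x, hx⟩
  · rintro ⟨h, hh⟩
    have h2 := hE.mpr ⟨h, hh⟩
    rw [show (fun h : W ⟶ Z.X (finLast n) => pullb NP.E h (extCast NP.E h0.symm hl.symm δ))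
        (c ≫ eqToHom hl.symm) = pullb NP.E (c ≫ eqToHom hl.symm)
        (extCast NP.E h0.symm hl.symm δ) from rfl, key] at h2
    exact (pushf_eqToHom_eq_zero_iff _ _).mp h2

lemma pullb_zero_mor (NP : PreNExangulated C n) {X0 Xl W : C}
    (δ : (NP.E.obj (op Xl)).obj X0) : pullb NP.E (0 : W ⟶ Xl) δ = 0 := by
  obtain ⟨Z, h0, hl, hd⟩ := NP.realize X0 Xl δ
  exact (pullb_extCast_eq_zero_iff NP δ h0 hl hd 0).mpr ⟨0, by simp⟩

lemma ext_eq_zero_of_pullb_inl_inr (NP : PreNExangulated C n) {X Y X0 : C}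
    (θ : (NP.E.obj (op (X ⊞ Y))).obj X0)
    (hX : pullb NP.E biprod.inl θ = 0) (hY : pullb NP.E biprod.inr θ = 0) : θ = 0 := by
  obtain ⟨Z, h0, hl, hd⟩ := NP.realize X0 (X ⊞ Y) θ
  obtain ⟨hx, hhx⟩ := (pullb_extCast_eq_zero_iff NP θ h0 hl hd _).mp hX
  obtain ⟨hy, hhy⟩ := (pullb_extCast_eq_zero_iff NP θ h0 hl hd _).mp hY
  have h1 : pullb NP.E (𝟙 (X ⊞ Y)) θ = 0 := by
    refine (pullb_extCast_eq_zero_iff NP θ h0 hl hd _).mpr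
      ⟨biprod.fst ≫ hx + biprod.snd ≫ hy, ?_⟩
    rw [Preadditive.add_comp, Category.assoc, Category.assoc, hhx, hhy,
      ← Category.assoc, ← Category.assoc, ← Preadditive.add_comp, biprod.total,
      Category.id_comp]
  simpa using h1

lemma ext_decomp (NP : PreNExangulated C n) {X Y X0 : C}
    (θ : (NP.E.obj (op (X ⊞ Y))).obj X0) :
    θ = pullb NP.E (biprod.fst ≫ biprod.inl) θ
      + pullb NP.E (biprod.snd ≫ biprod.inr) θ := by
  have hX : pullb NP.E biprod.inl (θ - pullb NP.E (biprod.fst ≫ biprod.inl) θ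
      - pullb NP.E (biprod.snd ≫ biprod.inr) θ) = 0 := by
    rw [pullb_sub, pullb_sub, pullb_pullb, pullb_pullb]
    have e1 : biprod.inl ≫ ((biprod.fst : X ⊞ Y ⟶ X) ≫ biprod.inl)
        = (biprod.inl : X ⟶ X ⊞ Y) := by simp
    have e2 : biprod.inl ≫ ((biprod.snd : X ⊞ Y ⟶ Y) ≫ biprod.inr)
        = (0 : X ⟶ X ⊞ Y) := by simp
    rw [e1, e2, pullb_zero_mor NP, sub_zero, sub_self]
  have hY : pullb NP.E biprod.inr (θ - pullb NP.E (biprod.fst ≫ biprod.inl) θ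
      - pullb NP.E (biprod.snd ≫ biprod.inr) θ) = 0 := by
    rw [pullb_sub, pullb_sub, pullb_pullb, pullb_pullb]
    have e1 : biprod.inr ≫ ((biprod.fst : X ⊞ Y ⟶ X) ≫ biprod.inl)
        = (0 : Y ⟶ X ⊞ Y) := by simp
    have e2 : biprod.inr ≫ ((biprod.snd : X ⊞ Y ⟶ Y) ≫ biprod.inr)
        = (biprod.inr : Y ⟶ X ⊞ Y) := by simp
    rw [e1, e2, pullb_zero_mor NP, sub_zero, sub_self]
  have h := ext_eq_zero_of_pullb_inl_inr NP _ hX hY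
  rw [sub_sub] at h
  exact sub_eq_zero.mp h


lemma pullb_add_mor (NP : PreNExangulated C n) {X0 Xl W : C} (c c' : W ⟶ Xl)
    (δ : (NP.E.obj (op Xl)).obj X0) :
    pullb NP.E (c + c') δ = pullb NP.E c δ + pullb NP.E c' δ := by
  set D := pullb NP.E (biprod.desc (𝟙 Xl) (𝟙 Xl)) δ with hD
  have hinl : pullb NP.E biprod.inl D = δ := by
    rw [hD, pullb_pullb, biprod.inl_desc, pullb_id]
  have hinr : pullb NP.E biprod.inr D = δ := by
    rw [hD, pullb_pullb, biprod.inr_desc, pullb_id]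
  have h1 : c + c' = biprod.lift c c' ≫ biprod.desc (𝟙 Xl) (𝟙 Xl) := by
    rw [biprod.lift_desc, Category.comp_id, Category.comp_id]
  rw [h1, ← pullb_pullb, ← hD, ext_decomp NP D, pullb_add]
  have m1 : biprod.lift c c' ≫ ((biprod.fst : Xl ⊞ Xl ⟶ Xl) ≫ biprod.inl)
      = c ≫ (biprod.inl : Xl ⟶ Xl ⊞ Xl) := by simp
  have m2 : biprod.lift c c' ≫ ((biprod.snd : Xl ⊞ Xl ⟶ Xl) ≫ biprod.inr)
      = c' ≫ (biprod.inr : Xl ⟶ Xl ⊞ Xl) := by simp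
  congr 1
  · rw [pullb_pullb, m1, ← pullb_pullb, hinl]
  · rw [pullb_pullb, m2, ← pullb_pullb, hinr]

lemma pullb_neg_one (NP : PreNExangulated C n) {X0 Xl : C}
    (δ : (NP.E.obj (op Xl)).obj X0) :
    pullb NP.E (-(𝟙 Xl)) δ = -δ := by
  have h := pullb_add_mor NP (𝟙 Xl) (-(𝟙 Xl)) δ
  rw [show 𝟙 Xl + -(𝟙 Xl) = 0 by abel, pullb_zero_mor NP, pullb_id] at h
  exact eq_neg_of_add_eq_zero_right h.symm

end AuxSub


section AuxEFR

variable {A' : Type u₂} [Category.{v₂} A'] [Abelian A'] {n : ℕ}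

lemma epi_last_of_mor {E : Cᵒᵖ ⥤ C ⥤ AddCommGrpCat.{v}} {Z W : NExCplx C n}
    {ζ : NEext E Z} {ρ : NEext E W} (F : C ⥤ A') (φ : ExangleMor E Z W ζ ρ)
    (hiso : IsIso (φ.app (finLast n))) (h : Epi (F.map (Z.d (Fin.last n)))) :
    Epi (F.map (W.d (Fin.last n))) := by
  have sq := φ.comm (Fin.last n)
  haveI hiso' : IsIso (φ.app (Fin.last n).succ) := hiso
  haveI : Epi (F.map (φ.app (Fin.last n).succ)) := by
    haveI : IsIso (F.map (φ.app (Fin.last n).succ)) := inferInstance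
    exact IsIso.epi_of_iso _
  haveI : Epi (F.map (φ.app (Fin.last n).castSucc) ≫ F.map (W.d (Fin.last n))) := by
    rw [← F.map_comp, ← sq, F.map_comp]
    exact epi_comp _ _
  exact epi_of_epi (F.map (φ.app (Fin.last n).castSucc)) _

lemma zero_mem_EFR (N : NExangulated C n) (F : C ⥤ A') (Xl X0 : C) :
    (0 : (N.E.obj (op Xl)).obj X0) ∈ EFR N F Xl X0 := by
  intro Z h0 hl hd
  obtain ⟨h, hh⟩ := (pullb_extCast_eq_zero_iff N.toPreNExangulated
    (0 : (N.E.obj (op Xl)).obj X0) h0 hl hd (𝟙 Xl)).mp (by simp)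
  have hs : (eqToHom hl ≫ h) ≫ Z.d (Fin.last n) = 𝟙 _ := by
    rw [Category.assoc, hh, Category.id_comp, eqToHom_trans, eqToHom_refl]
  exact (SplitEpi.mk (F.map (eqToHom hl ≫ h))
    (by rw [← F.map_comp, hs, CategoryTheory.Functor.map_id])).epi

lemma pushf_mem_EFR (N : NExangulated C n) (F : C ⥤ A')
    {Xl X0 X0' : C} (a : X0 ⟶ X0') {δ : (N.E.obj (op Xl)).obj X0}
    (hδ : δ ∈ EFR N F Xl X0) : pushf N.E a δ ∈ EFR N F Xl X0' := by
  intro Z' h0' hl' hd'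
  obtain ⟨Z, h0, hl, hd⟩ := N.realize X0 Xl δ
  have epi1 := hδ Z h0 hl hd
  have compat : pushf N.E (eqToHom h0 ≫ a ≫ eqToHom h0'.symm)
        (extCast N.E h0.symm hl.symm δ)
      = pullb N.E (eqToHom (hl.trans hl'.symm))
        (extCast N.E h0'.symm hl'.symm (pushf N.E a δ)) := by
    simp only [extCast_eq, pushf_pullb, pushf_pushf, pullb_pullb, eqToHom_trans, eqToHom_trans_assoc, eqToHom_refl, Category.id_comp]
  obtain ⟨φ, hφ0, hφl⟩ := N.lift_exists hd hd' _ _ compat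
  have hiso : IsIso (φ.app (finLast n)) := by rw [hφl]; infer_instance
  exact epi_last_of_mor F φ hiso epi1

lemma biprodext_mem_EFR (N : NExangulated C n) (F : C ⥤ A') [F.Additive]
    {Xl1 Xl2 X01 X02 : C} {δ1 : (N.E.obj (op Xl1)).obj X01}
    {δ2 : (N.E.obj (op Xl2)).obj X02}
    (h1 : δ1 ∈ EFR N F Xl1 X01) (h2 : δ2 ∈ EFR N F Xl2 X02) :
    pushf N.E biprod.inl (pullb N.E biprod.fst δ1)
      + pushf N.E biprod.inr (pullb N.E biprod.snd δ2)
        ∈ EFR N F (Xl1 ⊞ Xl2) (X01 ⊞ X02) := by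
  intro Z h0 hl hd
  obtain ⟨Z1, h01, hl1, hd1⟩ := N.realize X01 Xl1 δ1
  obtain ⟨Z2, h02, hl2, hd2⟩ := N.realize X02 Xl2 δ2
  have epi1 := h1 Z1 h01 hl1 hd1
  have epi2 := h2 Z2 h02 hl2 hd2
  have compat1 : pushf N.E (eqToHom h01 ≫ biprod.inl ≫ eqToHom h0.symm)
        (extCast N.E h01.symm hl1.symm δ1)
      = pullb N.E (eqToHom hl1 ≫ biprod.inl ≫ eqToHom hl.symm)
        (extCast N.E h0.symm hl.symm
          (pushf N.E biprod.inl (pullb N.E biprod.fst δ1)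
            + pushf N.E biprod.inr (pullb N.E biprod.snd δ2))) := by
    simp only [extCast_eq, pushf_pullb, pushf_pushf, pullb_pullb, pushf_add, pullb_add,
        eqToHom_trans, eqToHom_trans_assoc, eqToHom_refl, Category.id_comp, Category.comp_id,
        Category.assoc, biprod.inl_fst, biprod.inl_snd, biprod.inr_fst, biprod.inr_snd,
        biprod.inl_fst_assoc, biprod.inl_snd_assoc, biprod.inr_fst_assoc, biprod.inr_snd_assoc,
        zero_comp, comp_zero, pullb_zero_mor N.toPreNExangulated, pushf_zero, add_zero, zero_add]
  have compat2 : pushf N.E (eqToHom h02 ≫ biprod.inr ≫ eqToHom h0.symm)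
        (extCast N.E h02.symm hl2.symm δ2)
      = pullb N.E (eqToHom hl2 ≫ biprod.inr ≫ eqToHom hl.symm)
        (extCast N.E h0.symm hl.symm
          (pushf N.E biprod.inl (pullb N.E biprod.fst δ1)
            + pushf N.E biprod.inr (pullb N.E biprod.snd δ2))) := by
    simp only [extCast_eq, pushf_pullb, pushf_pushf, pullb_pullb, pushf_add, pullb_add,
        eqToHom_trans, eqToHom_trans_assoc, eqToHom_refl, Category.id_comp, Category.comp_id,
        Category.assoc, biprod.inl_fst, biprod.inl_snd, biprod.inr_fst, biprod.inr_snd,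
        biprod.inl_fst_assoc, biprod.inl_snd_assoc, biprod.inr_fst_assoc, biprod.inr_snd_assoc,
        zero_comp, comp_zero, pullb_zero_mor N.toPreNExangulated, pushf_zero, add_zero, zero_add]
  obtain ⟨φ1, hφ10, hφ1l⟩ := N.lift_exists hd1 hd _ _ compat1
  obtain ⟨φ2, hφ20, hφ2l⟩ := N.lift_exists hd2 hd _ _ compat2
  rw [Preadditive.epi_iff_cancel_zero]
  intro R t ht
  have sq1 := φ1.comm (Fin.last n)
  have sq2 := φ2.comm (Fin.last n)
  have k1 : F.map (φ1.app (finLast n)) ≫ t = 0 := by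
    have : F.map (Z1.d (Fin.last n)) ≫ F.map (φ1.app (Fin.last n).succ) ≫ t = 0 := by
      rw [← Category.assoc, ← F.map_comp, sq1, F.map_comp, Category.assoc, ht,
        comp_zero]
    exact zero_of_epi_comp _ this
  have k2 : F.map (φ2.app (finLast n)) ≫ t = 0 := by
    have : F.map (Z2.d (Fin.last n)) ≫ F.map (φ2.app (Fin.last n).succ) ≫ t = 0 := by
      rw [← Category.assoc, ← F.map_comp, sq2, F.map_comp, Category.assoc, ht,
        comp_zero]
    exact zero_of_epi_comp _ this
  rw [hφ1l] at k1
  rw [hφ2l] at k2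
  set t' : F.obj (Xl1 ⊞ Xl2) ⟶ R := F.map (eqToHom hl.symm) ≫ t with ht'
  have j1 : F.map (biprod.inl : Xl1 ⟶ Xl1 ⊞ Xl2) ≫ t' = 0 := by
    have := k1
    rw [F.map_comp, F.map_comp, Category.assoc, Category.assoc] at this
    have h' := zero_of_epi_comp (F.map (eqToHom hl1)) this
    rw [ht']; rw [← Category.assoc] at h' ⊢
    exact h'
  have j2 : F.map (biprod.inr : Xl2 ⟶ Xl1 ⊞ Xl2) ≫ t' = 0 := by
    have := k2
    rw [F.map_comp, F.map_comp, Category.assoc, Category.assoc] at this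
    have h' := zero_of_epi_comp (F.map (eqToHom hl2)) this
    rw [ht']; rw [← Category.assoc] at h' ⊢
    exact h'
  have ht'0 : t' = 0 := by
    have : (𝟙 (F.obj (Xl1 ⊞ Xl2))) ≫ t' = 0 := by
      rw [← CategoryTheory.Functor.map_id, ← biprod.total, F.map_add,
        Preadditive.add_comp, F.map_comp, F.map_comp, Category.assoc,
        Category.assoc, j1, j2, comp_zero, comp_zero, add_zero]
    rwa [Category.id_comp] at this
  have : t = F.map (eqToHom hl) ≫ t' := by
    rw [ht', ← Category.assoc, ← F.map_comp, eqToHom_trans, eqToHom_refl,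
      CategoryTheory.Functor.map_id, Category.id_comp]
  rw [this, ht'0, comp_zero]

end AuxEFR


section AuxAbelian

variable {𝒜 : Type u₂} [Category.{v₂} 𝒜] [Abelian 𝒜]

lemma epi_kernelι_comp_fst {X Y R : 𝒜} (v : X ⊞ Y ⟶ R) (hv : Epi (biprod.inr ≫ v)) :
    Epi (kernel.ι v ≫ biprod.fst) := by
  haveI : Epi (biprod.inr ≫ v) := hv
  haveI hP : Epi (pullback.fst (biprod.inl ≫ v) (biprod.inr ≫ v)) :=
    Abelian.epi_pullback_of_epi_g _ _
  have hm : biprod.lift (pullback.fst (biprod.inl ≫ v) (biprod.inr ≫ v))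
      (-(pullback.snd (biprod.inl ≫ v) (biprod.inr ≫ v))) ≫ v = 0 := by
    rw [biprod.lift_eq, Preadditive.add_comp, Category.assoc, Preadditive.neg_comp,
      Preadditive.neg_comp, Category.assoc, pullback.condition, add_neg_cancel]
  have fac : kernel.lift v _ hm ≫ (kernel.ι v ≫ biprod.fst)
      = pullback.fst (biprod.inl ≫ v) (biprod.inr ≫ v) := by
    rw [← Category.assoc, kernel.lift_ι, biprod.lift_fst]
  exact epi_of_epi_fac fac

lemma epi_f_comp_fst_of_exact {S : ShortComplex 𝒜} (hS : S.Exact) {X Y : 𝒜}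
    (e : S.X₂ ≅ X ⊞ Y) (hv : Epi (biprod.inr ≫ e.inv ≫ S.g)) :
    Epi (S.f ≫ e.hom ≫ biprod.fst) := by
  set v : X ⊞ Y ⟶ S.X₃ := e.inv ≫ S.g with hvdef
  have hzero : (S.f ≫ e.hom) ≫ v = 0 := by
    rw [hvdef, Category.assoc, Iso.hom_inv_id_assoc, S.zero]
  set S' := ShortComplex.mk (S.f ≫ e.hom) v hzero with hS'def
  have hS'exact : S'.Exact := by
    refine ShortComplex.exact_of_iso ?_ hS
    exact ShortComplex.isoMk (Iso.refl _) e (Iso.refl _)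
      (by simp [S']) (by simp [S', hvdef])
  haveI := hS'exact.epi_toCycles
  haveI hk : Epi (kernel.ι v ≫ biprod.fst) := epi_kernelι_comp_fst v hv
  have hi : S'.iCycles = S'.cyclesIsoKernel.hom ≫ kernel.ι S'.g := by
    rw [ShortComplex.cyclesIsoKernel_hom, kernel.lift_ι]
  have h1 : S'.toCycles ≫ S'.iCycles = S.f ≫ e.hom := ShortComplex.toCycles_i S'
  rw [hi] at h1
  have key : S.f ≫ e.hom ≫ biprod.fst
      = S'.toCycles ≫ S'.cyclesIsoKernel.hom ≫ (kernel.ι v ≫ biprod.fst) := by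
    calc S.f ≫ e.hom ≫ biprod.fst = (S.f ≫ e.hom) ≫ biprod.fst := by
          rw [Category.assoc]
      _ = (S'.toCycles ≫ S'.cyclesIsoKernel.hom ≫ kernel.ι S'.g) ≫ biprod.fst := by
          rw [h1]
      _ = S'.toCycles ≫ S'.cyclesIsoKernel.hom ≫ (kernel.ι v ≫ biprod.fst) := by
          simp only [Category.assoc]; rfl
  rw [key]
  haveI : Epi (S'.cyclesIsoKernel.hom ≫ kernel.ι v ≫ biprod.fst) := epi_comp _ _
  exact epi_comp _ _

end AuxAbelian


section AuxPullb

variable {A' : Type u₂} [Category.{v₂} A'] [Abelian A'] {n : ℕ}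

lemma epi_of_neg_epi {X Y : A'} {u : X ⟶ Y} (h : Epi (-u)) : Epi u := by
  have huu : (-u) ≫ (-(𝟙 Y)) = u := by simp
  haveI := h
  haveI : IsIso (-(𝟙 Y)) := ⟨⟨-(𝟙 Y), by simp, by simp⟩⟩
  rw [← huu]
  exact epi_comp _ _

lemma pullb_mem_EFR (N : NExangulated C n) (hn : 0 < n) (F : C ⥤ A') [F.Additive]
    (hF : IsHalfExact N F) {Xl' Xl X0 : C} (c : Xl' ⟶ Xl)
    {δ : (N.E.obj (op Xl)).obj X0} (hδ : δ ∈ EFR N F Xl X0) :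
    pullb N.E c δ ∈ EFR N F Xl' X0 := by
  obtain ⟨m, rfl⟩ : ∃ m, n = m + 1 := ⟨n - 1, by omega⟩
  intro Z' h0' hl' hd'
  obtain ⟨Z, h0, hl, hd⟩ := N.realize X0 Xl δ
  have epi1 := hδ Z h0 hl hd
  have h00 : Z'.X (fin0 (m+1)) = Z.X (fin0 (m+1)) := h0'.trans h0.symm
  have compat : pushf N.E (eqToHom h00) (extCast N.E h0'.symm hl'.symm (pullb N.E c δ))
      = pullb N.E (eqToHom hl' ≫ c ≫ eqToHom hl.symm) (extCast N.E h0.symm hl.symm δ) := by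
    simp only [extCast_eq, pushf_pullb, pushf_pushf, pullb_pullb, eqToHom_trans, eqToHom_trans_assoc, eqToHom_refl, Category.id_comp, Category.assoc, Category.comp_id]
  obtain ⟨φ, hφ0, hφl, hHC⟩ := N.ea2 Z' Z _ _ hd' hd h00 _ compat
  set A : Fin (m+2) → C := fun i => Z'.X i.succ with hA
  set B : Fin (m+2) → C := fun i => Z.X i.succ with hB
  set f : ∀ i : Fin (m+1), A i.castSucc ⟶ A i.succ := fun i => Z'.d i.succ with hf
  set g : ∀ i : Fin (m+1), B i.castSucc ⟶ B i.succ := fun i => Z.d i.succ with hg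
  set ψ : ∀ i : Fin (m+2), A i ⟶ B i := fun i => φ.app i.succ with hψ
  obtain ⟨w, hex⟩ := hF hHC (Fin.last m)
  -- instance for mapBiprod
  haveI : PreservesBinaryBiproduct (Z'.X (finLast (m+1))) (Z.X ((Fin.last (m+1)).castSucc)) F := by
    haveI := F.preservesFiniteBiproductsOfAdditive
    exact preservesBinaryBiproduct_of_preservesBiproduct F _ _
  -- object identifications
  have qsrc : coneX (m+1) A B ((Fin.last (m+1)).castSucc)
      = (Z'.X (finLast (m+1)) ⊞ Z.X ((Fin.last (m+1)).castSucc)) := by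
    refine (coneX_mid (m+1) A B ((Fin.last (m+1)).castSucc) (by simp) (by simp)).trans ?_
    rfl
  have qlast : coneX (m+1) A B ((Fin.last (m+1)).succ) = Z.X (finLast (m+1)) := by
    exact coneX_last (m+1) A B
  have qB : B ((Fin.last m).succ) = Z.X (finLast (m+1)) := rfl
  -- the last differential of the cone
  have c1 : ¬((Fin.last (m+1)).val = 0) := by simp
  have c2 : ¬((Fin.last (m+1)).val < m + 1) := by simp
  have dlast : coneD (m+1) A B f g ψ (Fin.last (m+1))
      = eqToHom qsrc ≫ biprod.desc
          (show Z'.X (finLast (m+1)) ⟶ Z.X (finLast (m+1)) from ψ (Fin.last (m+1)))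
          (show Z.X ((Fin.last (m+1)).castSucc) ⟶ Z.X (finLast (m+1)) from
            g (Fin.last m) ≫ eqToHom qB)
        ≫ eqToHom qlast.symm := by
    simp only [coneD]
    rw [dif_neg c1, dif_neg c2]
    rfl
  have claim1 : (biprod.inr : Z.X ((Fin.last (m+1)).castSucc) ⟶
        Z'.X (finLast (m+1)) ⊞ Z.X ((Fin.last (m+1)).castSucc))
        ≫ eqToHom qsrc.symm ≫ coneD (m+1) A B f g ψ (Fin.last (m+1))
      = Z.d (Fin.last (m+1)) ≫ eqToHom qlast.symm := by
    rw [dlast, eqToHom_trans_assoc,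
      show eqToHom (qsrc.symm.trans qsrc)
        = 𝟙 (Z'.X (finLast (m+1)) ⊞ Z.X ((Fin.last (m+1)).castSucc)) from rfl,
      Category.id_comp, biprod.inr_desc_assoc, Category.assoc, eqToHom_trans]
    rfl
  -- the short complex
  have wgood : F.map (coneD (m+1) A B f g ψ ((Fin.last m).castSucc))
      ≫ F.map (coneD (m+1) A B f g ψ (Fin.last (m+1))) = 0 := w
  have hexg : (ShortComplex.mk (F.map (coneD (m+1) A B f g ψ ((Fin.last m).castSucc)))
      (F.map (coneD (m+1) A B f g ψ (Fin.last (m+1)))) wgood).Exact := hex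
  -- epi of the inr-component of the last cone differential
  have hv : Epi (biprod.inr ≫ (F.mapIso (eqToIso qsrc) ≪≫
      F.mapBiprod (Z'.X (finLast (m+1))) (Z.X ((Fin.last (m+1)).castSucc))).inv
      ≫ F.map (coneD (m+1) A B f g ψ (Fin.last (m+1)))) := by
    have heq : biprod.inr ≫ (F.mapIso (eqToIso qsrc) ≪≫
        F.mapBiprod (Z'.X (finLast (m+1))) (Z.X ((Fin.last (m+1)).castSucc))).inv
        ≫ F.map (coneD (m+1) A B f g ψ (Fin.last (m+1)))
        = F.map (Z.d (Fin.last (m+1))) ≫ F.map (eqToHom qlast.symm) := by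
      simp only [Iso.trans_inv, Functor.mapIso_inv, eqToIso.inv, Functor.mapBiprod_inv,
        Category.assoc, biprod.inr_desc_assoc]
      rw [← F.map_comp, ← F.map_comp, ← F.map_comp]
      exact congrArg F.map claim1
    rw [heq]
    haveI : Epi (F.map (Z.d (Fin.last (m+1)))) := epi1
    haveI : IsIso (F.map (eqToHom qlast.symm)) := inferInstance
    exact epi_comp _ _
  -- the key ∃-form of the second-to-last cone differential composed with fst
  have key : ∃ w₀ : coneX (m+1) A B (((Fin.last m).castSucc).castSucc)
        ⟶ Z'.X ((Fin.last (m+1)).castSucc),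
      coneD (m+1) A B f g ψ ((Fin.last m).castSucc) ≫ eqToHom qsrc
          ≫ (biprod.fst : Z'.X (finLast (m+1)) ⊞ Z.X ((Fin.last (m+1)).castSucc)
              ⟶ Z'.X (finLast (m+1)))
        = w₀ ≫ (-(Z'.d (Fin.last (m+1)))) := by
    rcases Nat.eq_zero_or_pos m with hm0 | hmpos
    · subst hm0
      have cz1 : ((Fin.last 0).castSucc : Fin (0+2)).val = 0 := rfl
      have cz2 : ¬((0:ℕ) + 1 = 0) := by omega
      have ssrc : coneX (0+1) A B (((Fin.last 0).castSucc).castSucc)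
          = Z'.X ((Fin.last (0+1)).castSucc) := by
        exact coneX_zero (0+1) A B
      have d0 : coneD (0+1) A B f g ψ ((Fin.last 0).castSucc)
          = eqToHom ssrc ≫ biprod.lift
              (show Z'.X ((Fin.last (0+1)).castSucc) ⟶ Z'.X (finLast (0+1)) from
                -(f (Fin.last 0)))
              (show Z'.X ((Fin.last (0+1)).castSucc) ⟶ Z.X ((Fin.last (0+1)).castSucc) from
                ψ ((Fin.last 0).castSucc))
            ≫ eqToHom qsrc.symm := by
        simp only [coneD]
        rw [dif_pos cz1, dif_neg cz2]
        rfl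
      refine ⟨eqToHom ssrc, ?_⟩
      rw [d0, Category.assoc, Category.assoc, eqToHom_trans_assoc,
        show eqToHom (qsrc.symm.trans qsrc)
          = 𝟙 (Z'.X (finLast (0+1)) ⊞ Z.X ((Fin.last (0+1)).castSucc)) from rfl,
        Category.id_comp, biprod.lift_fst]
      rfl
    · have cm1 : ¬(((Fin.last m).castSucc : Fin (m+2)).val = 0) := by
        simp; omega
      have cm2 : ((Fin.last m).castSucc : Fin (m+2)).val < m + 1 := by simp
      have rsrc : coneX (m+1) A B (((Fin.last m).castSucc).castSucc)
          = (A ((Fin.last m).castSucc) ⊞ B ⟨m - 1, by omega⟩) := by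
        refine (coneX_mid (m+1) A B (((Fin.last m).castSucc).castSucc)
          (by simp; omega) (by simp)).trans ?_
        rfl
      have rB : B ((⟨m - 1, by omega⟩ : Fin (m+1)).succ) = B ((Fin.last m).castSucc) :=
        congrArg B (Fin.ext (by simp; omega))
      have dmid : coneD (m+1) A B f g ψ ((Fin.last m).castSucc)
          = eqToHom rsrc ≫ biprod.lift
              (show (A ((Fin.last m).castSucc) ⊞ B ⟨m - 1, by omega⟩ : C)
                  ⟶ Z'.X (finLast (m+1)) from
                biprod.desc (-(f (Fin.last m))) 0)
              (show (A ((Fin.last m).castSucc) ⊞ B ⟨m - 1, by omega⟩ : C)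
                  ⟶ Z.X ((Fin.last (m+1)).castSucc) from
                biprod.desc (ψ ((Fin.last m).castSucc))
                  (g ⟨m - 1, by omega⟩ ≫ eqToHom rB))
            ≫ eqToHom qsrc.symm := by
        simp only [coneD]
        rw [dif_neg cm1, dif_pos cm2]
        rfl
      refine ⟨eqToHom rsrc ≫ (biprod.fst : (A ((Fin.last m).castSucc) ⊞ B ⟨m - 1, by omega⟩ : C) ⟶ A ((Fin.last m).castSucc)), ?_⟩
      rw [dmid, Category.assoc, Category.assoc, eqToHom_trans_assoc,
        show eqToHom (qsrc.symm.trans qsrc)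
          = 𝟙 (Z'.X (finLast (m+1)) ⊞ Z.X ((Fin.last (m+1)).castSucc)) from rfl,
        Category.id_comp, biprod.lift_fst]
      have hdesc : biprod.desc (-(f (Fin.last m))) (0 : B ⟨m - 1, by omega⟩ ⟶ A ((Fin.last m).succ))
          = biprod.fst ≫ (-(f (Fin.last m))) := by
        apply biprod.hom_ext' <;> simp
      rw [show (show (A ((Fin.last m).castSucc) ⊞ B ⟨m - 1, by omega⟩ : C)
            ⟶ Z'.X (finLast (m+1)) from biprod.desc (-(f (Fin.last m))) 0)
          = biprod.fst ≫ (-(f (Fin.last m))) from hdesc]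
      rw [Category.assoc]
      rfl
  obtain ⟨w₀, hw₀⟩ := key
  have hepi0 : Epi (F.map (coneD (m+1) A B f g ψ ((Fin.last m).castSucc))
      ≫ (F.mapIso (eqToIso qsrc) ≪≫
        F.mapBiprod (Z'.X (finLast (m+1))) (Z.X ((Fin.last (m+1)).castSucc))).hom
      ≫ biprod.fst) :=
    epi_f_comp_fst_of_exact hexg _ hv
  have hrw : F.map (coneD (m+1) A B f g ψ ((Fin.last m).castSucc))
      ≫ (F.mapIso (eqToIso qsrc) ≪≫
        F.mapBiprod (Z'.X (finLast (m+1))) (Z.X ((Fin.last (m+1)).castSucc))).hom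
      ≫ biprod.fst
      = F.map w₀ ≫ F.map (-(Z'.d (Fin.last (m+1)))) := by
    simp only [Iso.trans_hom, Functor.mapIso_hom, eqToIso.hom, Functor.mapBiprod_hom,
      Category.assoc, biprod.lift_fst]
    rw [← F.map_comp, ← F.map_comp, ← F.map_comp]
    exact congrArg F.map hw₀
  rw [hrw] at hepi0
  haveI := hepi0
  have hneg : Epi (F.map (-(Z'.d (Fin.last (m+1))))) := epi_of_epi (F.map w₀) _
  rw [F.map_neg] at hneg
  exact epi_of_neg_epi hneg

end AuxPullb

/-- **Theorem 4.5(1), first part.** For a half exact functor `F : C → 𝒜` from an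
`n`-exangulated category to an abelian category, `E^F_R` is an additive
subfunctor of `E`: each `E^F_R(X_{n+1}, X₀)` is a subgroup of `E(X_{n+1}, X₀)`,
and `E^F_R` is stable under pushforward `a_*` and pullback `c^*`. -/
theorem EFR_additive_subfunctor {A' : Type u₂} [Category.{v₂} A'] [Abelian A']
    (n : ℕ) (hn : 0 < n) (N : NExangulated C n) (F : C ⥤ A') [F.Additive]
    (hF : IsHalfExact N F) :
    (∀ Xl X0 : C, ∃ G : AddSubgroup ((N.E.obj (op Xl)).obj X0),
      (G : Set ((N.E.obj (op Xl)).obj X0)) = EFR N F Xl X0) ∧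
    (∀ (Xl X0 X0' : C) (a : X0 ⟶ X0') (δ : (N.E.obj (op Xl)).obj X0),
      δ ∈ EFR N F Xl X0 → pushf N.E a δ ∈ EFR N F Xl X0') ∧
    (∀ (Xl' Xl X0 : C) (c : Xl' ⟶ Xl) (δ : (N.E.obj (op Xl)).obj X0),
      δ ∈ EFR N F Xl X0 → pullb N.E c δ ∈ EFR N F Xl' X0) := by
  refine ⟨?_, ?_, ?_⟩
  · intro Xl X0
    refine ⟨{ carrier := EFR N F Xl X0, zero_mem' := zero_mem_EFR N F Xl X0,
              add_mem' := ?_, neg_mem' := ?_ }, rfl⟩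
    · intro a b ha hb
      have hθ := biprodext_mem_EFR N F ha hb
      have h2 := pushf_mem_EFR N F (biprod.desc (𝟙 X0) (𝟙 X0)) hθ
      have h3 := pullb_mem_EFR N hn F hF (biprod.lift (𝟙 Xl) (𝟙 Xl)) h2
      have hsum : pullb N.E (biprod.lift (𝟙 Xl) (𝟙 Xl))
          (pushf N.E (biprod.desc (𝟙 X0) (𝟙 X0))
            (pushf N.E biprod.inl (pullb N.E biprod.fst a)
              + pushf N.E biprod.inr (pullb N.E biprod.snd b))) = a + b := by
        simp [pushf_add, pullb_add, pushf_pushf, pullb_pullb]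
      rwa [hsum] at h3
    · intro a ha
      have h1 := pullb_mem_EFR N hn F hF (-(𝟙 Xl)) ha
      rwa [pullb_neg_one N.toPreNExangulated] at h1
  · intro Xl X0 X0' a δ h
    exact pushf_mem_EFR N F a h
  · intro Xl' Xl X0 c δ h
    exact pullb_mem_EFR N hn F hF c h

end NEx
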